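/- Upper bound for the normalization integral at p = n. Let n ≥ 1 be an integer and let ω_n be the Lebesgue volume of the unit ball in ℝⁿ. Then I_n = ∫_{ℝⁿ} (1 + |z|²/n)^{−n} dz ≤ 2·ω_n·n^{n/2}. -/

import Mathlib

open MeasureTheory Metric Set

noncomputable section

abbrev Euc (n : ℕ) := EuclideanSpace ℝ (Fin n)

/-- The Lebesgue volume of the unit ball in `ℝⁿ`. -/
def unitBallVol (n : ℕ) : ℝ := (volume (ball (0 : Euc n) 1)).toReal

lemma oneD_estimate {n : ℕ} (hn : 1 ≤ n) :
    ∫ y in Ioi (0:ℝ), y ^ (n - 1) * (1 + y ^ 2 / (n : ℝ)) ^ (-(n : ℝ))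
      ≤ 2 * (Real.sqrt n) ^ n / n := by
  have hn0 : (0:ℝ) < n := by exact_mod_cast hn
  set s : ℝ := Real.sqrt n with hs
  have hs0 : 0 < s := Real.sqrt_pos.2 hn0
  have hs2 : s ^ 2 = (n:ℝ) := Real.sq_sqrt hn0.le
  set g : ℝ → ℝ := fun y => y ^ (n - 1) * (1 + y ^ 2 / (n : ℝ)) ^ (-(n : ℝ)) with hg
  have hgcont : Continuous g := by
    apply (continuous_pow _).mul
    apply Continuous.rpow_const (by continuity)
    intro x; left
    have : (0:ℝ) < 1 + x ^ 2 / n := by positivity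
    exact this.ne'
  -- pointwise bound on the tail
  have htail : ∀ y ∈ Ioi s, g y ≤ (n:ℝ) ^ n * y ^ (-(n:ℝ) - 1) := by
    intro y hy
    have hys : s < y := hy
    have hy0 : 0 < y := hs0.trans hys
    have h1 : (1 + y ^ 2 / (n:ℝ)) ^ (-(n:ℝ)) ≤ (y ^ 2 / (n:ℝ)) ^ (-(n:ℝ)) :=
      Real.rpow_le_rpow_of_nonpos (by positivity) (by linarith) (neg_nonpos.2 hn0.le)
    have h2 : y ^ (n - 1) * (y ^ 2 / (n:ℝ)) ^ (-(n:ℝ)) = (n:ℝ) ^ n * y ^ (-(n:ℝ) - 1) := by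
      rw [Real.rpow_neg (by positivity), Real.rpow_natCast]
      have hexp : (-(n:ℝ) - 1) = -(((n+1 : ℕ) : ℝ)) := by push_cast; ring
      rw [hexp, Real.rpow_neg hy0.le, Real.rpow_natCast]
      have hpow : y ^ (n - 1) * y ^ (n + 1) = (y ^ 2) ^ n := by
        rw [← pow_add, ← pow_mul]
        congr 1
        omega
      have hy1 : y ^ (n + 1) ≠ 0 := by positivity
      have hdn : ((y ^ 2 / (n:ℝ)) ^ n) ≠ 0 := by positivity
      field_simp
      rw [hpow, div_pow, div_mul_cancel₀ _ (pow_ne_zero _ hn0.ne')]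
    calc g y ≤ y ^ (n - 1) * (y ^ 2 / (n:ℝ)) ^ (-(n:ℝ)) := by
          exact mul_le_mul_of_nonneg_left h1 (by positivity)
      _ = (n:ℝ) ^ n * y ^ (-(n:ℝ) - 1) := h2
  -- integrability
  have hint1 : IntegrableOn g (Ioc 0 s) := hgcont.integrableOn_Ioc
  have hbint : IntegrableOn (fun y : ℝ => (n:ℝ) ^ n * y ^ (-(n:ℝ) - 1)) (Ioi s) :=
    (integrableOn_Ioi_rpow_of_lt (by linarith) hs0).const_mul _
  have hint2 : IntegrableOn g (Ioi s) := by
    apply Integrable.mono hbint hgcont.aestronglyMeasurable.restrict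
    filter_upwards [ae_restrict_mem measurableSet_Ioi] with y hy
    have hy0 : 0 < y := hs0.trans hy
    rw [Real.norm_eq_abs, Real.norm_eq_abs, abs_of_nonneg (by positivity),
      abs_of_nonneg (by positivity)]
    exact htail y hy
  -- split the integral
  have hsplit : Ioc (0:ℝ) s ∪ Ioi s = Ioi 0 := Ioc_union_Ioi_eq_Ioi hs0.le
  have hIeq : ∫ y in Ioi (0:ℝ), g y = (∫ y in Ioc (0:ℝ) s, g y) + ∫ y in Ioi s, g y := by
    rw [← hsplit, setIntegral_union (Ioc_disjoint_Ioi le_rfl) measurableSet_Ioi hint1 hint2]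
  -- bound the first piece
  have hb1 : ∫ y in Ioc (0:ℝ) s, g y ≤ s ^ n / n := by
    have hle : ∫ y in Ioc (0:ℝ) s, g y ≤ ∫ y in Ioc (0:ℝ) s, y ^ (n - 1) := by
      apply setIntegral_mono_on hint1 ((continuous_pow _).integrableOn_Ioc)
        measurableSet_Ioc
      intro y hy
      have hy0 : 0 < y := hy.1
      have : (1 + y ^ 2 / (n:ℝ)) ^ (-(n:ℝ)) ≤ 1 :=
        Real.rpow_le_one_of_one_le_of_nonpos (le_add_of_nonneg_right (by positivity))
          (neg_nonpos.2 hn0.le)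
      calc g y ≤ y ^ (n - 1) * 1 := mul_le_mul_of_nonneg_left this (by positivity)
        _ = y ^ (n - 1) := mul_one _
    have heq : ∫ y in Ioc (0:ℝ) s, y ^ (n - 1) = s ^ n / n := by
      rw [← _root_.intervalIntegral.integral_of_le hs0.le]
      have h1 : n - 1 + 1 = n := by omega
      have h2 : ((n - 1 : ℕ) : ℝ) + 1 = (n : ℝ) := by
        push_cast [hn]; ring
      simp only [integral_pow, h1, h2]
      rw [zero_pow (by omega)]
      ring
    linarith
  -- bound the second piece
  have hb2 : ∫ y in Ioi s, g y ≤ s ^ n / n := by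
    have hle : ∫ y in Ioi s, g y ≤ ∫ y in Ioi s, (n:ℝ) ^ n * y ^ (-(n:ℝ) - 1) :=
      setIntegral_mono_on hint2 hbint measurableSet_Ioi htail
    have heq : ∫ y in Ioi s, (n:ℝ) ^ n * y ^ (-(n:ℝ) - 1) = s ^ n / n := by
      rw [integral_const_mul, integral_Ioi_rpow_of_lt (by linarith) hs0]
      have h1 : (-(n:ℝ) - 1 + 1) = -(n:ℝ) := by ring
      rw [h1, Real.rpow_neg hs0.le, ← Real.rpow_natCast s n]
      have hsn : (s : ℝ) ^ (n:ℝ) ≠ 0 := by positivity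
      have hnn : ((n:ℝ) ^ n) = (s ^ (n:ℝ)) ^ 2 := by
        rw [Real.rpow_natCast, ← pow_mul, mul_comm n 2, pow_mul, hs2]
      rw [hnn]
      field_simp
    linarith
  calc ∫ y in Ioi (0:ℝ), g y ≤ s ^ n / n + s ^ n / n := by rw [hIeq]; linarith
    _ = 2 * s ^ n / n := by ring

/-- **Upper bound for the normalization integral at `p = n`.** -/
theorem normalization_integral_upper_bound
    {n : ℕ} (hn : 1 ≤ n) :
    ∫ z : Euc n, (1 + ‖z‖ ^ 2 / (n : ℝ)) ^ (-(n : ℝ))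
      ≤ 2 * unitBallVol n * (n : ℝ) ^ ((n : ℝ) / 2) := by
  have hn0 : (0:ℝ) < n := by exact_mod_cast hn
  haveI : Nontrivial (Euc n) := by
    apply Module.nontrivial_of_finrank_pos (R := ℝ)
    rw [finrank_euclideanSpace_fin]
    exact hn
  have key := MeasureTheory.integral_fun_norm_addHaar (volume : Measure (Euc n))
    (fun r : ℝ => (1 + r ^ 2 / (n:ℝ)) ^ (-(n:ℝ)))
  rw [finrank_euclideanSpace_fin] at key
  rw [show (∫ z : Euc n, (1 + ‖z‖ ^ 2 / (n : ℝ)) ^ (-(n : ℝ)))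
      = ∫ z : Euc n, (fun r : ℝ => (1 + r ^ 2 / (n:ℝ)) ^ (-(n:ℝ))) ‖z‖ from rfl, key]
  simp only [nsmul_eq_mul, smul_eq_mul]
  have hsn : (Real.sqrt n) ^ n = (n:ℝ) ^ ((n:ℝ)/2) := by
    rw [Real.sqrt_eq_rpow, ← Real.rpow_natCast ((n:ℝ) ^ ((1:ℝ)/2)) n,
      ← Real.rpow_mul hn0.le]
    ring_nf
  have hω : 0 ≤ unitBallVol n := ENNReal.toReal_nonneg
  have h1 := oneD_estimate hn
  calc (n:ℝ) * ((volume (ball (0:Euc n) 1)).toReal *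
        ∫ y in Ioi (0:ℝ), y ^ (n - 1) * (1 + y ^ 2 / (n : ℝ)) ^ (-(n : ℝ)))
      ≤ (n:ℝ) * (unitBallVol n * (2 * (Real.sqrt n) ^ n / n)) := by
        apply mul_le_mul_of_nonneg_left _ hn0.le
        exact mul_le_mul_of_nonneg_left h1 hω
    _ = 2 * unitBallVol n * (n : ℝ) ^ ((n : ℝ) / 2) := by
        rw [← hsn]; field_simp
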